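/- Let 𝕂 be ℝ or ℂ, let λ ∈ 𝕂 with 0 < |λ| < 1, and let A_1 = [[1,0],[0,0]], A_2 = [[0,0],[0,1]], A_3 = [[0,λ],[λ,0]]. Then the triple 𝒜 = (A_1, A_2, A_3) is irreducible with ϱ(𝒜) = 1, has the rank one property and the finiteness property, but lacks the unbounded agreements property; moreover for every ξ with |λ| ≤ ξ ≤ |λ|^{−1} the norm ‖(x,y)ᵀ‖_ξ = max{|x|, ξ|y|} is a Barabanov norm for 𝒜, so 𝒜 has Barabanov norms that are not proportional to each other. -/

import Mathlib

open Filter Topology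

noncomputable section

namespace JSRPaper

variable {𝕂 : Type*} [RCLike 𝕂] {ι : Type*} [Fintype ι] [DecidableEq ι] {r : ℕ}

/-- The Euclidean operator norm of a matrix, i.e. the operator norm induced by the
Euclidean norm on `𝕂^ι`. -/
noncomputable def eNorm (A : Matrix ι ι 𝕂) : ℝ :=
  ‖Matrix.toEuclideanCLM (𝕜 := 𝕂) A‖

/-- The product `A_{i n} ⋯ A_{i 1}` associated to the word `i : Fin n → Fin r`. -/
noncomputable def wordProd (A : Fin r → Matrix ι ι 𝕂) {n : ℕ} (i : Fin n → Fin r) :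
    Matrix ι ι 𝕂 :=
  ((List.ofFn fun k => A (i k)).reverse).prod

/-- The joint spectral radius of the tuple `A`, expressed via the standard
characterisation `ϱ(𝒜) = inf_n max_{|i| = n} ‖A_{i_n} ⋯ A_{i_1}‖^{1/n}`
(the infimum equals the limit). -/
noncomputable def jsr (A : Fin r → Matrix ι ι 𝕂) : ℝ :=
  ⨅ n : ℕ+, (⨆ i : Fin (n : ℕ) → Fin r, eNorm (wordProd A i)) ^ ((n : ℝ)⁻¹)

/-- The spectral radius of a matrix, via Gelfand's formula
`ρ(A) = inf_k ‖A^k‖^{1/k}` (the infimum equals the limit). -/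
noncomputable def specRad (A : Matrix ι ι 𝕂) : ℝ :=
  ⨅ k : ℕ+, eNorm (A ^ (k : ℕ)) ^ (((k : ℕ) : ℝ)⁻¹)

/-- `N` is a norm on `𝕂^ι`. -/
def IsNorm (N : EuclideanSpace 𝕂 ι → ℝ) : Prop :=
  (∀ v, N v = 0 ↔ v = 0) ∧ (∀ (c : 𝕂) (v), N (c • v) = ‖c‖ * N v) ∧
    ∀ u v, N (u + v) ≤ N u + N v

/-- The operator norm of the matrix `A` induced by the norm `N` on `𝕂^ι`. -/
noncomputable def opNormWrt (N : EuclideanSpace 𝕂 ι → ℝ) (A : Matrix ι ι 𝕂) : ℝ :=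
  sSup {x : ℝ | ∃ v, N v ≤ 1 ∧ x = N (Matrix.toEuclideanCLM (𝕜 := 𝕂) A v)}

/-- `N` is a Barabanov norm for the tuple `A` : it is a norm and
`ϱ(𝒜) ‖v‖ = max_i ‖A_i v‖` for every `v`. -/
def IsBarabanov (A : Fin r → Matrix ι ι 𝕂) (N : EuclideanSpace 𝕂 ι → ℝ) : Prop :=
  IsNorm N ∧ ∀ v, jsr A * N v = ⨆ i : Fin r, N (Matrix.toEuclideanCLM (𝕜 := 𝕂) (A i) v)

/-- The tuple `A` is irreducible: no subspace of `𝕂^ι` other than `⊥` and `⊤`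
is invariant under every `A i`. -/
def IsIrreducible (A : Fin r → Matrix ι ι 𝕂) : Prop :=
  ∀ V : Submodule 𝕂 (EuclideanSpace 𝕂 ι),
    (∀ i, ∀ v ∈ V, Matrix.toEuclideanCLM (𝕜 := 𝕂) (A i) v ∈ V) → V = ⊥ ∨ V = ⊤

/-- Two words of length `n` are rotation equivalent if one is a cyclic shift of the other. -/
def RotEquiv {n : ℕ} (z w : Fin n → Fin r) : Prop :=
  ∃ k : ℕ, ∀ j : Fin n, z j = w ⟨(j.val + k) % n, Nat.mod_lt _ j.pos⟩

/-- The tuple `A` satisfies the strong finiteness hypothesis with characteristic word `ω`: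
for every Barabanov norm `N` for `A`, every word of the same length as `ω` which is not
rotation equivalent to `ω` has `N`-operator-norm product strictly less than `ϱ(𝒜)^n`. -/
def StrongFinHyp (A : Fin r → Matrix ι ι 𝕂) {n : ℕ} (ω : Fin n → Fin r) : Prop :=
  ∀ N : EuclideanSpace 𝕂 ι → ℝ, IsBarabanov A N →
    ∀ z : Fin n → Fin r, ¬ RotEquiv z ω → opNormWrt N (wordProd A z) < jsr A ^ n

/-- The tuple `A` is relatively product bounded : `ϱ(𝒜) > 0` and the set of normalised
products `ϱ(𝒜)^{-n} A_{i_n} ⋯ A_{i_1}` is bounded. -/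
def RelProdBounded (A : Fin r → Matrix ι ι 𝕂) : Prop :=
  0 < jsr A ∧ ∃ C : ℝ, ∀ (n : ℕ) (i : Fin n → Fin r), eNorm (wordProd A i) ≤ C * jsr A ^ n

/-- The limit semigroup `𝒮(𝒜) = ⋂_{m ≥ 1} closure (⋃_{n ≥ m} ϱ(𝒜)^{-n} 𝒜_n)`,
written out via the metric characterisation of the closure. -/
def limitSemigroup (A : Fin r → Matrix ι ι 𝕂) : Set (Matrix ι ι 𝕂) :=
  {B | ∀ m : ℕ, ∀ ε > (0 : ℝ), ∃ n : ℕ, m ≤ n ∧ ∃ i : Fin n → Fin r,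
    eNorm ((jsr A ^ n)⁻¹ • wordProd A i - B) < ε}

/-- The tuple `A` has the rank one property: it is relatively product bounded and every
nonzero element of the limit semigroup has rank one. -/
def RankOneProp (A : Fin r → Matrix ι ι 𝕂) : Prop :=
  RelProdBounded A ∧ ∀ B ∈ limitSemigroup A, B ≠ 0 → B.rank = 1

/-- The product `A_{i n} ⋯ A_{i 1}` along the first `n` terms of the sequence `i`
(indexed from `1`). -/
noncomputable def seqProd (A : Fin r → Matrix ι ι 𝕂) (i : ℕ → Fin r) (n : ℕ) :
    Matrix ι ι 𝕂 :=
  wordProd A fun k : Fin n => i (k.val + 1)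

/-- The unbounded agreements property: any two sequences whose normalised partial
products do not tend to zero (i.e. `limsup ‖A_{i(n)} ⋯ A_{i(1)}‖ / ϱ(𝒜)^n > 0`) contain
arbitrarily long identical blocks. -/
def UnboundedAgreements (A : Fin r → Matrix ι ι 𝕂) : Prop :=
  ∀ N : ℕ, ∀ i₁ i₂ : ℕ → Fin r,
    (∃ c > (0 : ℝ), ∀ m : ℕ, ∃ n, m ≤ n ∧ c ≤ eNorm (seqProd A i₁ n) / jsr A ^ n) →
    (∃ c > (0 : ℝ), ∀ m : ℕ, ∃ n, m ≤ n ∧ c ≤ eNorm (seqProd A i₂ n) / jsr A ^ n) →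
    ∃ n₁ n₂ : ℕ, ∀ k : ℕ, 1 ≤ k → k ≤ N → i₁ (n₁ + k) = i₂ (n₂ + k)

/-- The finiteness property: some periodic product realises the joint spectral radius,
`ρ(A_{i_n} ⋯ A_{i_1})^{1/n} = ϱ(𝒜)`. -/
def FinitenessProp (A : Fin r → Matrix ι ι 𝕂) : Prop :=
  ∃ (n : ℕ) (_ : 0 < n) (i : Fin n → Fin r),
    specRad (wordProd A i) ^ ((n : ℝ)⁻¹) = jsr A

/-- The second exterior power (second compound matrix) of a `d × d` matrix, written
in the standard basis `(e_i ∧ e_j)_{i < j}` of `⋀² 𝕂^d`. -/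
noncomputable def ext2 {d : ℕ} (A : Matrix (Fin d) (Fin d) 𝕂) :
    Matrix {p : Fin d × Fin d // p.1 < p.2} {p : Fin d × Fin d // p.1 < p.2} 𝕂 :=
  fun p q => A p.1.1 q.1.1 * A p.1.2 q.1.2 - A p.1.1 q.1.2 * A p.1.2 q.1.1

/-- The word `ω` of length `n` is a power of a shorter word. -/
def IsPowerOfShorter {n : ℕ} (ω : Fin n → Fin r) : Prop :=
  ∃ (q : ℕ) (h0 : 0 < q) (h1 : q < n), q ∣ n ∧
    ∀ j : Fin n, ω j = ω ⟨j.val % q, lt_trans (Nat.mod_lt _ h0) h1⟩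

/-- `Θ_ω(𝒜)`: the supremum of `‖A_{ω_n} ⋯ A_{ω_1}‖^{1/n}` over all Barabanov norms. -/
noncomputable def Theta {n : ℕ} (ω : Fin n → Fin r) (A : Fin r → Matrix ι ι 𝕂) : ℝ :=
  sSup {x : ℝ | ∃ N, IsBarabanov A N ∧ x = opNormWrt N (wordProd A ω) ^ ((n : ℝ)⁻¹)}

end JSRPaper


namespace Ex4Aux

open JSRPaper

variable {𝕂 : Type*} [RCLike 𝕂]

local notation "CLM" => Matrix.toEuclideanCLM (𝕜 := 𝕂) (n := Fin 2)

lemma clm_apply (A : Matrix (Fin 2) (Fin 2) 𝕂) (v : EuclideanSpace 𝕂 (Fin 2)) (i : Fin 2) :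
    (CLM A v) i = A i 0 * v 0 + A i 1 * v 1 := by
  have h := congrArg (fun f => f i) (Matrix.ofLp_toEuclideanCLM (𝕜 := 𝕂) A v)
  simp [Matrix.toLin'_apply, Matrix.mulVec, dotProduct, Fin.sum_univ_two] at h
  fin_cases i <;> simp

lemma norm2 (v : EuclideanSpace 𝕂 (Fin 2)) : ‖v‖ = Real.sqrt (‖v 0‖^2 + ‖v 1‖^2) := by
  rw [EuclideanSpace.norm_eq]; simp [Fin.sum_univ_two]

lemma coord_le_norm (v : EuclideanSpace 𝕂 (Fin 2)) (i : Fin 2) : ‖v i‖ ≤ ‖v‖ := by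
  rw [norm2]
  have h0 : (0:ℝ) ≤ ‖v 0‖^2 := sq_nonneg _
  have h1 : (0:ℝ) ≤ ‖v 1‖^2 := sq_nonneg _
  fin_cases i
  · calc ‖v 0‖ = Real.sqrt (‖v 0‖^2) := by rw [Real.sqrt_sq (norm_nonneg _)]
      _ ≤ _ := Real.sqrt_le_sqrt (by linarith)
  · calc ‖v 1‖ = Real.sqrt (‖v 1‖^2) := by rw [Real.sqrt_sq (norm_nonneg _)]
      _ ≤ _ := Real.sqrt_le_sqrt (by linarith)

lemma eNorm_def (A : Matrix (Fin 2) (Fin 2) 𝕂) : eNorm A = ‖CLM A‖ := rfl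

lemma entry_le_eNorm (A : Matrix (Fin 2) (Fin 2) 𝕂) (i j : Fin 2) : ‖A i j‖ ≤ eNorm A := by
  have hv : (CLM A (EuclideanSpace.single j 1)) i = A i j := by
    rw [clm_apply]
    fin_cases j <;> simp [EuclideanSpace.single_apply]
  calc ‖A i j‖ = ‖(CLM A (EuclideanSpace.single j 1)) i‖ := by rw [hv]
    _ ≤ ‖CLM A (EuclideanSpace.single j 1)‖ := coord_le_norm _ _
    _ ≤ ‖CLM A‖ * ‖(EuclideanSpace.single j 1 : EuclideanSpace 𝕂 (Fin 2))‖ :=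
        (CLM A).le_opNorm _
    _ = eNorm A := by rw [EuclideanSpace.norm_single]; simp [eNorm_def]

lemma eNorm_one : eNorm (1 : Matrix (Fin 2) (Fin 2) 𝕂) = 1 := by
  rw [eNorm_def, map_one]; simp

lemma eNorm_mul_le (A B : Matrix (Fin 2) (Fin 2) 𝕂) :
    eNorm (A * B) ≤ eNorm A * eNorm B := by
  rw [eNorm_def, eNorm_def, eNorm_def, map_mul]
  exact (CLM A).opNorm_comp_le (CLM B)

lemma eNorm_nonneg (A : Matrix (Fin 2) (Fin 2) 𝕂) : 0 ≤ eNorm A := norm_nonneg _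

lemma eNorm_eq_of (A : Matrix (Fin 2) (Fin 2) 𝕂) (c : ℝ) (hc : 0 ≤ c)
    (hle : ∀ v : EuclideanSpace 𝕂 (Fin 2), ‖CLM A v‖ ≤ c * ‖v‖)
    (hge : ∃ v : EuclideanSpace 𝕂 (Fin 2), ‖v‖ = 1 ∧ ‖CLM A v‖ = c) :
    eNorm A = c := by
  rw [eNorm_def]
  refine le_antisymm (ContinuousLinearMap.opNorm_le_bound _ hc hle) ?_
  obtain ⟨v, hv1, hvc⟩ := hge
  have := (CLM A).le_opNorm v
  rw [hv1, hvc, mul_one] at this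
  exact this

lemma normM1 (v : EuclideanSpace 𝕂 (Fin 2)) :
    ‖CLM !![(1:𝕂),0;0,0] v‖ = ‖v 0‖ := by
  rw [norm2, clm_apply, clm_apply]
  simp [Real.sqrt_sq, norm_nonneg]

lemma normM2 (v : EuclideanSpace 𝕂 (Fin 2)) :
    ‖CLM !![(0:𝕂),0;0,1] v‖ = ‖v 1‖ := by
  rw [norm2, clm_apply, clm_apply]
  simp [Real.sqrt_sq, norm_nonneg]

lemma normM3 (lam : 𝕂) (v : EuclideanSpace 𝕂 (Fin 2)) :
    ‖CLM !![(0:𝕂),lam;lam,0] v‖ = ‖lam‖ * ‖v‖ := by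
  rw [norm2, clm_apply, clm_apply, norm2]
  have e00 : !![(0:𝕂),lam;lam,0] 0 0 = 0 := by simp
  have e01 : !![(0:𝕂),lam;lam,0] 0 1 = lam := by simp
  have e10 : !![(0:𝕂),lam;lam,0] 1 0 = lam := by simp
  have e11 : !![(0:𝕂),lam;lam,0] 1 1 = 0 := by simp
  rw [e00, e01, e10, e11, zero_mul, zero_add, zero_mul, add_zero, norm_mul, norm_mul,
    mul_pow, mul_pow,
    show ‖lam‖^2*‖v 1‖^2 + ‖lam‖^2*‖v 0‖^2 = ‖lam‖^2*(‖v 0‖^2+‖v 1‖^2) by ring,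
    Real.sqrt_mul (sq_nonneg _), Real.sqrt_sq (norm_nonneg _)]

lemma coordM1 (v : EuclideanSpace 𝕂 (Fin 2)) :
    (CLM !![(1:𝕂),0;0,0] v) 0 = v 0 ∧ (CLM !![(1:𝕂),0;0,0] v) 1 = 0 := by
  rw [clm_apply, clm_apply]; constructor <;> simp

lemma coordM2 (v : EuclideanSpace 𝕂 (Fin 2)) :
    (CLM !![(0:𝕂),0;0,1] v) 0 = 0 ∧ (CLM !![(0:𝕂),0;0,1] v) 1 = v 1 := by
  rw [clm_apply, clm_apply]; constructor <;> simp

lemma coordM3 (lam : 𝕂) (v : EuclideanSpace 𝕂 (Fin 2)) :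
    (CLM !![(0:𝕂),lam;lam,0] v) 0 = lam * v 1 ∧
      (CLM !![(0:𝕂),lam;lam,0] v) 1 = lam * v 0 := by
  rw [clm_apply, clm_apply]; constructor <;> simp

lemma eNorm_M1 : eNorm (!![(1:𝕂),0;0,0]) = 1 := by
  refine eNorm_eq_of _ 1 zero_le_one (fun v => ?_) ?_
  · rw [normM1, one_mul]; exact coord_le_norm v 0
  · refine ⟨EuclideanSpace.single 0 1, by simp [EuclideanSpace.norm_single], ?_⟩
    rw [normM1]; simp [EuclideanSpace.single_apply]

lemma eNorm_M2 : eNorm (!![(0:𝕂),0;0,1]) = 1 := by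
  refine eNorm_eq_of _ 1 zero_le_one (fun v => ?_) ?_
  · rw [normM2, one_mul]; exact coord_le_norm v 1
  · refine ⟨EuclideanSpace.single 1 1, by simp [EuclideanSpace.norm_single], ?_⟩
    rw [normM2]; simp [EuclideanSpace.single_apply]

lemma eNorm_M3 (lam : 𝕂) : eNorm (!![(0:𝕂),lam;lam,0]) = ‖lam‖ := by
  refine eNorm_eq_of _ ‖lam‖ (norm_nonneg _) (fun v => le_of_eq (normM3 lam v)) ?_
  refine ⟨EuclideanSpace.single 0 1, by simp [EuclideanSpace.norm_single], ?_⟩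
  rw [normM3]; simp [EuclideanSpace.norm_single]

lemma prod_le_one (l : List (Matrix (Fin 2) (Fin 2) 𝕂)) (h : ∀ x ∈ l, eNorm x ≤ 1) :
    eNorm l.prod ≤ 1 := by
  induction l with
  | nil => simp [List.prod_nil, eNorm_one]
  | cons a t ih =>
    rw [List.prod_cons]
    calc eNorm (a * t.prod) ≤ eNorm a * eNorm t.prod := eNorm_mul_le _ _
      _ ≤ 1 * 1 := by
          apply mul_le_mul (h a (by simp)) (ih fun x hx => h x (by simp [hx]))
            (eNorm_nonneg _) zero_le_one
      _ = 1 := mul_one 1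

lemma det_prod_le (c : ℝ) (hc : 0 ≤ c) (l : List (Matrix (Fin 2) (Fin 2) 𝕂))
    (h : ∀ x ∈ l, ‖x.det‖ ≤ c) : ‖l.prod.det‖ ≤ c ^ l.length := by
  induction l with
  | nil => simp
  | cons a t ih =>
    rw [List.prod_cons, List.length_cons, Matrix.det_mul, norm_mul, pow_succ']
    exact mul_le_mul (h a (by simp)) (ih fun x hx => h x (by simp [hx])) (norm_nonneg _)
      hc

lemma pow_idem (M : Matrix (Fin 2) (Fin 2) 𝕂) (h : M * M = M) (n : ℕ) :
    M ^ (n + 1) = M := by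
  induction n with
  | zero => rw [pow_one]
  | succ k ih => rw [pow_succ, ih, h]

lemma ciSup_fin3 (f : Fin 3 → ℝ) : (⨆ i, f i) = max (f 0) (max (f 1) (f 2)) := by
  refine le_antisymm (ciSup_le fun i => ?_) ?_
  · fin_cases i
    · exact le_max_left _ _
    · exact le_trans (le_max_left _ _) (le_max_right _ _)
    · exact le_trans (le_max_right _ _) (le_max_right _ _)
  · have hb : BddAbove (Set.range f) := (Set.finite_range f).bddAbove
    refine max_le (le_ciSup hb 0) (max_le (le_ciSup hb 1) (le_ciSup hb 2))

end Ex4Aux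

namespace Ex4Aux

open JSRPaper

variable {𝕂 : Type*} [RCLike 𝕂]

/-- The tuple of Example 4. -/
noncomputable def E4 (lam : 𝕂) : Fin 3 → Matrix (Fin 2) (Fin 2) 𝕂 :=
  ![!![1, 0; 0, 0], !![0, 0; 0, 1], !![0, lam; lam, 0]]

lemma E4_zero (lam : 𝕂) : E4 lam 0 = !![(1:𝕂), 0; 0, 0] := rfl
lemma E4_one (lam : 𝕂) : E4 lam 1 = !![(0:𝕂), 0; 0, 1] := rfl
lemma E4_two (lam : 𝕂) : E4 lam 2 = !![(0:𝕂), lam; lam, 0] := rfl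

lemma eNorm_E4_le (lam : 𝕂) (h1 : ‖lam‖ < 1) (j : Fin 3) : eNorm (E4 lam j) ≤ 1 := by
  fin_cases j
  · show eNorm (E4 lam 0) ≤ 1
    rw [E4_zero, eNorm_M1]
  · show eNorm (E4 lam 1) ≤ 1
    rw [E4_one, eNorm_M2]
  · show eNorm (E4 lam 2) ≤ 1
    rw [E4_two, eNorm_M3]; exact h1.le

lemma wordProd_mem {r : ℕ} (A : Fin r → Matrix (Fin 2) (Fin 2) 𝕂) {n : ℕ}
    (i : Fin n → Fin r) (x : Matrix (Fin 2) (Fin 2) 𝕂)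
    (hx : x ∈ (List.ofFn fun k => A (i k)).reverse) : ∃ k, x = A (i k) := by
  rw [List.mem_reverse, List.mem_ofFn] at hx
  obtain ⟨k, hk⟩ := hx
  exact ⟨k, hk.symm⟩

lemma wordProd_le_one (lam : 𝕂) (h1 : ‖lam‖ < 1) {n : ℕ} (i : Fin n → Fin 3) :
    eNorm (wordProd (E4 lam) i) ≤ 1 := by
  apply prod_le_one
  intro x hx
  obtain ⟨k, hk⟩ := wordProd_mem (E4 lam) i x hx
  rw [hk]
  exact eNorm_E4_le lam h1 _

lemma wordProd_const {r : ℕ} (A : Fin r → Matrix (Fin 2) (Fin 2) 𝕂) (j : Fin r)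
    (h : A j * A j = A j) (n : ℕ) : wordProd A (fun _ : Fin (n+1) => j) = A j := by
  rw [wordProd, List.ofFn_const, List.reverse_replicate, List.prod_replicate]
  exact pow_idem _ h n

lemma M1_idem : !![(1:𝕂), 0; 0, 0] * !![(1:𝕂), 0; 0, 0] = !![(1:𝕂), 0; 0, 0] := by
  ext i j; fin_cases i <;> fin_cases j <;> simp [Matrix.mul_apply, Fin.sum_univ_two]

lemma M2_idem : !![(0:𝕂), 0; 0, 1] * !![(0:𝕂), 0; 0, 1] = !![(0:𝕂), 0; 0, 1] := by
  ext i j; fin_cases i <;> fin_cases j <;> simp [Matrix.mul_apply, Fin.sum_univ_two]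

lemma sup_words (lam : 𝕂) (h1 : ‖lam‖ < 1) (n : ℕ) (hn : 0 < n) :
    (⨆ i : Fin n → Fin 3, eNorm (wordProd (E4 lam) i)) = 1 := by
  obtain ⟨m, rfl⟩ : ∃ m, n = m + 1 := ⟨n - 1, (Nat.succ_pred_eq_of_pos hn).symm⟩
  have hconst : eNorm (wordProd (E4 lam) (fun _ : Fin (m+1) => (0 : Fin 3))) = 1 := by
    rw [wordProd_const _ _ M1_idem, E4_zero, eNorm_M1]
  refine le_antisymm (ciSup_le fun i => wordProd_le_one lam h1 i) ?_
  have hb : BddAbove (Set.range fun i : Fin (m+1) → Fin 3 => eNorm (wordProd (E4 lam) i)) :=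
    (Set.finite_range _).bddAbove
  calc (1:ℝ) = eNorm (wordProd (E4 lam) (fun _ : Fin (m+1) => (0 : Fin 3))) := hconst.symm
    _ ≤ _ := le_ciSup hb _

lemma jsr_E4 (lam : 𝕂) (h1 : ‖lam‖ < 1) : jsr (E4 lam) = 1 := by
  rw [jsr]
  have h : ∀ n : ℕ+,
      (⨆ i : Fin (n : ℕ) → Fin 3, eNorm (wordProd (E4 lam) i)) ^ ((n : ℝ)⁻¹) = 1 := by
    intro n
    rw [sup_words lam h1 (n : ℕ) n.2, Real.one_rpow]
  calc (⨅ n : ℕ+, (⨆ i : Fin (n : ℕ) → Fin 3, eNorm (wordProd (E4 lam) i)) ^ ((n : ℝ)⁻¹))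
      = ⨅ _ : ℕ+, (1:ℝ) := iInf_congr h
    _ = 1 := ciInf_const

lemma rank_one_of (B : Matrix (Fin 2) (Fin 2) 𝕂) (hB : B ≠ 0) (hdet : B.det = 0) :
    B.rank = 1 := by
  have h2 : B.rank ≤ 2 := by simpa using B.rank_le_card_width
  have hne2 : B.rank ≠ 2 := by
    intro h
    have ht : LinearMap.range B.mulVecLin = ⊤ := by
      apply Submodule.eq_top_of_finrank_eq
      simpa [Matrix.rank] using h
    have hsurj : Function.Surjective B.mulVec := by
      have := LinearMap.range_eq_top.mp ht
      exact this
    have := Matrix.mulVec_surjective_iff_isUnit.mp hsurj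
    rw [Matrix.isUnit_iff_isUnit_det, hdet] at this
    exact this.ne_zero rfl
  have hne0 : B.rank ≠ 0 := by
    intro h
    obtain ⟨i, j, hij⟩ : ∃ i j, B i j ≠ 0 := by
      by_contra hc; push_neg at hc; exact hB (by ext i j; simpa using hc i j)
    have hr : LinearMap.range B.mulVecLin = ⊥ := by
      rw [← Submodule.finrank_eq_zero (R := 𝕂)]; simpa [Matrix.rank] using h
    have h0 : B.mulVecLin = 0 := LinearMap.range_eq_bot.mp hr
    have := congrArg (fun f => f (Pi.single j 1) i) h0
    simp [Matrix.mulVecLin, Matrix.mulVec_single] at this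
    exact hij this
  omega

lemma detE4_le (lam : 𝕂) (j : Fin 3) : ‖(E4 lam j).det‖ ≤ ‖lam‖ ^ 2 := by
  fin_cases j
  · show ‖(E4 lam 0).det‖ ≤ ‖lam‖ ^ 2
    rw [E4_zero, Matrix.det_fin_two]; simp [sq_nonneg]
  · show ‖(E4 lam 1).det‖ ≤ ‖lam‖ ^ 2
    rw [E4_one, Matrix.det_fin_two]; simp [sq_nonneg]
  · show ‖(E4 lam 2).det‖ ≤ ‖lam‖ ^ 2
    rw [E4_two, Matrix.det_fin_two]
    simp [norm_mul, sq]

lemma det_wordProd_le (lam : 𝕂) {n : ℕ} (i : Fin n → Fin 3) :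
    ‖(wordProd (E4 lam) i).det‖ ≤ (‖lam‖ ^ 2) ^ n := by
  have h := det_prod_le (‖lam‖ ^ 2) (sq_nonneg _) ((List.ofFn fun k => E4 lam (i k)).reverse)
    (fun x hx => by
      obtain ⟨k, hk⟩ := wordProd_mem (E4 lam) i x hx
      rw [hk]; exact detE4_le lam _)
  simpa [wordProd] using h

end Ex4Aux

namespace Ex4Aux

open JSRPaper

variable {𝕂 : Type*} [RCLike 𝕂]

local notation "CLM" => Matrix.toEuclideanCLM (𝕜 := 𝕂) (n := Fin 2)

lemma barab (lam : 𝕂) (h0 : 0 < ‖lam‖) (h1 : ‖lam‖ < 1) (ξ : ℝ)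
    (hξ1 : ‖lam‖ ≤ ξ) (hξ2 : ξ ≤ ‖lam‖⁻¹) :
    IsBarabanov (E4 lam) (fun v : EuclideanSpace 𝕂 (Fin 2) => max ‖v 0‖ (ξ * ‖v 1‖)) := by
  have hξpos : 0 < ξ := lt_of_lt_of_le h0 hξ1
  have hξl : ξ * ‖lam‖ ≤ 1 := by
    calc ξ * ‖lam‖ ≤ ‖lam‖⁻¹ * ‖lam‖ := mul_le_mul_of_nonneg_right hξ2 h0.le
      _ = 1 := inv_mul_cancel₀ (ne_of_gt h0)
  constructor
  · refine ⟨fun v => ?_, fun c v => ?_, fun u v => ?_⟩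
    · constructor
      · intro h
        have ha : ‖v 0‖ ≤ 0 := h ▸ le_max_left _ _
        have hb : ξ * ‖v 1‖ ≤ 0 := h ▸ le_max_right _ _
        have hv0 : v 0 = 0 := norm_le_zero_iff.mp ha
        have hv1 : v 1 = 0 := by
          have : ‖v 1‖ ≤ 0 := by nlinarith [norm_nonneg (v 1)]
          exact norm_le_zero_iff.mp this
        ext i; fin_cases i
        · simpa using hv0
        · simpa using hv1
      · intro h; subst h; simp
    · simp only [PiLp.smul_apply, smul_eq_mul, norm_mul]
      rw [mul_max_of_nonneg _ _ (norm_nonneg c), mul_left_comm ξ ‖c‖]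
    · simp only [PiLp.add_apply]
      apply max_le
      · calc ‖u 0 + v 0‖ ≤ ‖u 0‖ + ‖v 0‖ := norm_add_le _ _
          _ ≤ _ := add_le_add (le_max_left _ _) (le_max_left _ _)
      · calc ξ * ‖u 1 + v 1‖ ≤ ξ * (‖u 1‖ + ‖v 1‖) := by
              nlinarith [norm_add_le (u 1) (v 1)]
          _ = ξ * ‖u 1‖ + ξ * ‖v 1‖ := by ring
          _ ≤ _ := add_le_add (le_max_right _ _) (le_max_right _ _)
  · intro v
    rw [jsr_E4 lam h1, one_mul, ciSup_fin3]
    simp only [E4_zero, E4_one, E4_two]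
    rw [(coordM1 v).1, (coordM1 v).2, (coordM2 v).1, (coordM2 v).2,
      (coordM3 lam v).1, (coordM3 lam v).2]
    have m1 : max ‖v 0‖ (ξ * ‖(0:𝕂)‖) = ‖v 0‖ := by
      rw [norm_zero, mul_zero]; exact max_eq_left (norm_nonneg _)
    have m2 : max ‖(0:𝕂)‖ (ξ * ‖v 1‖) = ξ * ‖v 1‖ := by
      rw [norm_zero]; exact max_eq_right (by positivity)
    rw [m1, m2, norm_mul, norm_mul, ← max_assoc]
    symm
    apply max_eq_left
    apply max_le
    · calc ‖lam‖ * ‖v 1‖ ≤ ξ * ‖v 1‖ := mul_le_mul_of_nonneg_right hξ1 (norm_nonneg _)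
        _ ≤ _ := le_max_right _ _
    · calc ξ * (‖lam‖ * ‖v 0‖) ≤ ‖v 0‖ := by nlinarith [norm_nonneg (v 0)]
        _ ≤ _ := le_max_left _ _

end Ex4Aux

namespace Ex4Aux

open JSRPaper

variable {𝕂 : Type*} [RCLike 𝕂]

set_option linter.unusedSectionVars false

lemma vec_ext (u w : EuclideanSpace 𝕂 (Fin 2)) (h0 : u 0 = w 0) (h1 : u 1 = w 1) :
    u = w := by
  ext i
  fin_cases i
  · exact h0
  · exact h1

lemma wordProd_fin1 {r : ℕ} (A : Fin r → Matrix (Fin 2) (Fin 2) 𝕂) (i : Fin 1 → Fin r) :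
    wordProd A i = A (i 0) := by
  rw [wordProd]
  simp

end Ex4Aux

open JSRPaper in
/-- **Example 4.** For `A₁ = [[1,0],[0,0]]`, `A₂ = [[0,0],[0,1]]`, `A₃ = [[0,λ],[λ,0]]`
with `0 < |λ| < 1`, the triple `𝒜 = (A₁, A₂, A₃)` is irreducible with `ϱ(𝒜) = 1`, has
the rank one and finiteness properties but lacks the unbounded agreements property, and
for every `|λ| ≤ ξ ≤ |λ|⁻¹` the norm `‖(x,y)‖_ξ = max {|x|, ξ|y|}` is a Barabanov norm,
so `𝒜` has non-proportional Barabanov norms. -/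
theorem stmt_16 {𝕂 : Type*} [RCLike 𝕂] (lam : 𝕂) (h0 : 0 < ‖lam‖) (h1 : ‖lam‖ < 1)
    (A : Fin 3 → Matrix (Fin 2) (Fin 2) 𝕂)
    (hA : A = ![!![1, 0; 0, 0], !![0, 0; 0, 1], !![0, lam; lam, 0]]) :
    IsIrreducible A ∧
    jsr A = 1 ∧
    RankOneProp A ∧
    FinitenessProp A ∧
    ¬ UnboundedAgreements A ∧
    (∀ ξ : ℝ, ‖lam‖ ≤ ξ → ξ ≤ ‖lam‖⁻¹ →
      IsBarabanov A (fun v : EuclideanSpace 𝕂 (Fin 2) => max ‖v 0‖ (ξ * ‖v 1‖))) ∧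
    (∃ N₁ N₂ : EuclideanSpace 𝕂 (Fin 2) → ℝ, IsBarabanov A N₁ ∧ IsBarabanov A N₂ ∧
      ¬ ∃ c > (0 : ℝ), ∀ v, N₂ v = c * N₁ v) := by
  have hA' : A = Ex4Aux.E4 lam := hA
  clear hA
  subst hA'
  have hlam : lam ≠ 0 := by
    intro h; rw [h] at h0; simp at h0
  refine ⟨?_, Ex4Aux.jsr_E4 lam h1, ?_, ?_, ?_, ?_, ?_⟩
  · -- irreducibility
    intro V hV
    by_cases hbot : V = ⊥
    · exact Or.inl hbot
    right
    obtain ⟨v, hvV, hvne⟩ := Submodule.exists_mem_ne_zero_of_ne_bot hbot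
    have key0 : ∀ w ∈ V, w 0 ≠ 0 →
        (EuclideanSpace.single (0:Fin 2) (1:𝕂) : EuclideanSpace 𝕂 (Fin 2)) ∈ V := by
      intro w hw hw0
      have h1w := hV 0 w hw
      have heq : Matrix.toEuclideanCLM (𝕜 := 𝕂) (Ex4Aux.E4 lam 0) w
          = w 0 • EuclideanSpace.single (0:Fin 2) (1:𝕂) := by
        rw [Ex4Aux.E4_zero]
        apply Ex4Aux.vec_ext
        · rw [(Ex4Aux.coordM1 w).1]; simp [EuclideanSpace.single_apply]
        · rw [(Ex4Aux.coordM1 w).2]; simp [EuclideanSpace.single_apply]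
      rw [heq] at h1w
      have := V.smul_mem (w 0)⁻¹ h1w
      rwa [smul_smul, inv_mul_cancel₀ hw0, one_smul] at this
    have key1 : ∀ w ∈ V, w 1 ≠ 0 →
        (EuclideanSpace.single (1:Fin 2) (1:𝕂) : EuclideanSpace 𝕂 (Fin 2)) ∈ V := by
      intro w hw hw1
      have h1w := hV 1 w hw
      have heq : Matrix.toEuclideanCLM (𝕜 := 𝕂) (Ex4Aux.E4 lam 1) w
          = w 1 • EuclideanSpace.single (1:Fin 2) (1:𝕂) := by
        rw [Ex4Aux.E4_one]
        apply Ex4Aux.vec_ext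
        · rw [(Ex4Aux.coordM2 w).1]; simp [EuclideanSpace.single_apply]
        · rw [(Ex4Aux.coordM2 w).2]; simp [EuclideanSpace.single_apply]
      rw [heq] at h1w
      have := V.smul_mem (w 1)⁻¹ h1w
      rwa [smul_smul, inv_mul_cancel₀ hw1, one_smul] at this
    have key01 : (EuclideanSpace.single (0:Fin 2) (1:𝕂) : EuclideanSpace 𝕂 (Fin 2)) ∈ V →
        (EuclideanSpace.single (1:Fin 2) (1:𝕂) : EuclideanSpace 𝕂 (Fin 2)) ∈ V := by
      intro hs
      have h2w := hV 2 _ hs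
      have heq : Matrix.toEuclideanCLM (𝕜 := 𝕂) (Ex4Aux.E4 lam 2)
            (EuclideanSpace.single (0:Fin 2) (1:𝕂))
          = lam • EuclideanSpace.single (1:Fin 2) (1:𝕂) := by
        rw [Ex4Aux.E4_two]
        apply Ex4Aux.vec_ext
        · rw [(Ex4Aux.coordM3 lam _).1]; simp [EuclideanSpace.single_apply]
        · rw [(Ex4Aux.coordM3 lam _).2]; simp [EuclideanSpace.single_apply]
      rw [heq] at h2w
      have := V.smul_mem lam⁻¹ h2w
      rwa [smul_smul, inv_mul_cancel₀ hlam, one_smul] at this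
    have key10 : (EuclideanSpace.single (1:Fin 2) (1:𝕂) : EuclideanSpace 𝕂 (Fin 2)) ∈ V →
        (EuclideanSpace.single (0:Fin 2) (1:𝕂) : EuclideanSpace 𝕂 (Fin 2)) ∈ V := by
      intro hs
      have h2w := hV 2 _ hs
      have heq : Matrix.toEuclideanCLM (𝕜 := 𝕂) (Ex4Aux.E4 lam 2)
            (EuclideanSpace.single (1:Fin 2) (1:𝕂))
          = lam • EuclideanSpace.single (0:Fin 2) (1:𝕂) := by
        rw [Ex4Aux.E4_two]
        apply Ex4Aux.vec_ext
        · rw [(Ex4Aux.coordM3 lam _).1]; simp [EuclideanSpace.single_apply]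
        · rw [(Ex4Aux.coordM3 lam _).2]; simp [EuclideanSpace.single_apply]
      rw [heq] at h2w
      have := V.smul_mem lam⁻¹ h2w
      rwa [smul_smul, inv_mul_cancel₀ hlam, one_smul] at this
    have hboth : (EuclideanSpace.single (0:Fin 2) (1:𝕂) : EuclideanSpace 𝕂 (Fin 2)) ∈ V ∧
        (EuclideanSpace.single (1:Fin 2) (1:𝕂) : EuclideanSpace 𝕂 (Fin 2)) ∈ V := by
      have hcase : v 0 ≠ 0 ∨ v 1 ≠ 0 := by
        by_contra h
        push_neg at h
        apply hvne
        ext j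
        fin_cases j
        · simpa using h.1
        · simpa using h.2
      rcases hcase with h | h
      · have := key0 v hvV h
        exact ⟨this, key01 this⟩
      · have := key1 v hvV h
        exact ⟨key10 this, this⟩
    rw [Submodule.eq_top_iff']
    intro w
    have hw : w = w 0 • EuclideanSpace.single (0:Fin 2) (1:𝕂)
        + w 1 • EuclideanSpace.single (1:Fin 2) (1:𝕂) := by
      ext j
      fin_cases j <;> simp [EuclideanSpace.single_apply]
    rw [hw]
    exact V.add_mem (V.smul_mem _ hboth.1) (V.smul_mem _ hboth.2)
  · -- rank one property
    constructor
    · refine ⟨by rw [Ex4Aux.jsr_E4 lam h1]; exact one_pos, 1, fun n i => ?_⟩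
      rw [Ex4Aux.jsr_E4 lam h1, one_pow, mul_one]
      exact Ex4Aux.wordProd_le_one lam h1 i
    · intro B hB hBne
      refine Ex4Aux.rank_one_of B hBne ?_
      by_contra hd
      have hη : 0 < ‖B.det‖ := norm_pos_iff.mpr hd
      obtain ⟨m, hm⟩ := exists_pow_lt_of_lt_one (by positivity : (0:ℝ) < ‖B.det‖/2) h1
      set ε := min 1 (‖B.det‖/13) with hεdef
      have hε : 0 < ε := lt_min one_pos (by positivity)
      obtain ⟨n, hmn, i, hlt⟩ := hB m ε hε
      rw [Ex4Aux.jsr_E4 lam h1, one_pow, inv_one, one_smul] at hlt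
      set P := wordProd (Ex4Aux.E4 lam) i with hPdef
      have hent : ∀ a b : Fin 2, ‖P a b - B a b‖ < ε := by
        intro a b
        have h := Ex4Aux.entry_le_eNorm (P - B) a b
        rw [Matrix.sub_apply] at h
        exact lt_of_le_of_lt h hlt
      have hPent : ∀ a b : Fin 2, ‖P a b‖ ≤ 1 := fun a b =>
        (Ex4Aux.entry_le_eNorm P a b).trans (Ex4Aux.wordProd_le_one lam h1 i)
      have hε1 : ε ≤ 1 := min_le_left _ _
      have hBent : ∀ a b : Fin 2, ‖B a b‖ ≤ 2 := by
        intro a b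
        calc ‖B a b‖ = ‖P a b - (P a b - B a b)‖ := by congr 1; ring
          _ ≤ ‖P a b‖ + ‖P a b - B a b‖ := norm_sub_le _ _
          _ ≤ 1 + 1 := add_le_add (hPent a b) ((hent a b).le.trans hε1)
          _ = 2 := by norm_num
      have hdiff : ‖B.det - P.det‖ ≤ 6 * ε := by
        rw [Matrix.det_fin_two, Matrix.det_fin_two,
          show B 0 0 * B 1 1 - B 0 1 * B 1 0 - (P 0 0 * P 1 1 - P 0 1 * P 1 0)
            = ((B 0 0 - P 0 0) * B 1 1 + P 0 0 * (B 1 1 - P 1 1))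
              - ((B 0 1 - P 0 1) * B 1 0 + P 0 1 * (B 1 0 - P 1 0)) from by ring]
        have k1 : ‖(B 0 0 - P 0 0) * B 1 1‖ ≤ ε * 2 := by
          rw [norm_mul, ← norm_sub_rev]
          exact mul_le_mul (hent 0 0).le (hBent 1 1) (norm_nonneg _) hε.le
        have k2 : ‖P 0 0 * (B 1 1 - P 1 1)‖ ≤ 1 * ε := by
          rw [norm_mul, ← norm_sub_rev (P 1 1)]
          exact mul_le_mul (hPent 0 0) (hent 1 1).le (norm_nonneg _) zero_le_one
        have k3 : ‖(B 0 1 - P 0 1) * B 1 0‖ ≤ ε * 2 := by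
          rw [norm_mul, ← norm_sub_rev]
          exact mul_le_mul (hent 0 1).le (hBent 1 0) (norm_nonneg _) hε.le
        have k4 : ‖P 0 1 * (B 1 0 - P 1 0)‖ ≤ 1 * ε := by
          rw [norm_mul, ← norm_sub_rev (P 1 0)]
          exact mul_le_mul (hPent 0 1) (hent 1 0).le (norm_nonneg _) zero_le_one
        calc ‖((B 0 0 - P 0 0) * B 1 1 + P 0 0 * (B 1 1 - P 1 1))
              - ((B 0 1 - P 0 1) * B 1 0 + P 0 1 * (B 1 0 - P 1 0))‖
            ≤ ‖(B 0 0 - P 0 0) * B 1 1 + P 0 0 * (B 1 1 - P 1 1)‖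
              + ‖(B 0 1 - P 0 1) * B 1 0 + P 0 1 * (B 1 0 - P 1 0)‖ := norm_sub_le _ _
          _ ≤ (‖(B 0 0 - P 0 0) * B 1 1‖ + ‖P 0 0 * (B 1 1 - P 1 1)‖)
              + (‖(B 0 1 - P 0 1) * B 1 0‖ + ‖P 0 1 * (B 1 0 - P 1 0)‖) :=
              add_le_add (norm_add_le _ _) (norm_add_le _ _)
          _ ≤ 6 * ε := by linarith
      have hPd : ‖P.det‖ ≤ ‖B.det‖/2 := by
        calc ‖P.det‖ ≤ (‖lam‖^2)^n := Ex4Aux.det_wordProd_le lam i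
          _ = ‖lam‖^(2*n) := by rw [← pow_mul]
          _ ≤ ‖lam‖^m := pow_le_pow_of_le_one (norm_nonneg _) h1.le (by omega)
          _ ≤ ‖B.det‖/2 := hm.le
      have htot : ‖B.det‖ ≤ ‖B.det - P.det‖ + ‖P.det‖ := by
        calc ‖B.det‖ = ‖(B.det - P.det) + P.det‖ := by congr 1; ring
          _ ≤ _ := norm_add_le _ _
      have hε13 : ε ≤ ‖B.det‖/13 := min_le_right _ _
      linarith
  · -- finiteness property
    refine ⟨1, one_pos, (fun _ => 0), ?_⟩
    rw [Ex4Aux.wordProd_fin1, Ex4Aux.jsr_E4 lam h1]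
    have hs : specRad (Ex4Aux.E4 lam 0) = 1 := by
      rw [specRad]
      have h : ∀ k : ℕ+,
          eNorm ((Ex4Aux.E4 lam 0) ^ (k:ℕ)) ^ (((k:ℕ):ℝ)⁻¹) = 1 := by
        intro k
        obtain ⟨mm, hmm⟩ : ∃ mm, (k:ℕ) = mm + 1 :=
          ⟨(k:ℕ) - 1, (Nat.succ_pred_eq_of_pos k.2).symm⟩
        rw [hmm, Ex4Aux.E4_zero, Ex4Aux.pow_idem _ Ex4Aux.M1_idem, Ex4Aux.eNorm_M1,
          Real.one_rpow]
      calc (⨅ k : ℕ+, eNorm ((Ex4Aux.E4 lam 0) ^ (k:ℕ)) ^ (((k:ℕ):ℝ)⁻¹))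
          = ⨅ _ : ℕ+, (1:ℝ) := iInf_congr h
        _ = 1 := ciInf_const
    rw [hs]
    norm_num
  · -- not unbounded agreements
    intro hUA
    have prem : ∀ j : Fin 3, Ex4Aux.E4 lam j * Ex4Aux.E4 lam j = Ex4Aux.E4 lam j →
        eNorm (Ex4Aux.E4 lam j) = 1 →
        ∃ c > (0:ℝ), ∀ m : ℕ, ∃ n, m ≤ n ∧
          c ≤ eNorm (seqProd (Ex4Aux.E4 lam) (fun _ => j) n) / jsr (Ex4Aux.E4 lam) ^ n := by
      intro j hj hej
      refine ⟨1, one_pos, fun m => ⟨m + 1, Nat.le_succ m, ?_⟩⟩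
      have hseq : seqProd (Ex4Aux.E4 lam) (fun _ => j) (m+1)
          = wordProd (Ex4Aux.E4 lam) (fun _ : Fin (m+1) => j) := rfl
      rw [Ex4Aux.jsr_E4 lam h1, one_pow, div_one, hseq, Ex4Aux.wordProd_const _ _ hj, hej]
    obtain ⟨n₁, n₂, hk⟩ := hUA 1 (fun _ => 0) (fun _ => 1)
      (prem 0 Ex4Aux.M1_idem (by rw [Ex4Aux.E4_zero, Ex4Aux.eNorm_M1]))
      (prem 1 Ex4Aux.M2_idem (by rw [Ex4Aux.E4_one, Ex4Aux.eNorm_M2]))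
    have := hk 1 le_rfl le_rfl
    simp at this
  · -- Barabanov norms
    intro ξ hξ1 hξ2
    exact Ex4Aux.barab lam h0 h1 ξ hξ1 hξ2
  · -- non-proportional Barabanov norms
    have hl1 : ‖lam‖ ≤ ‖lam‖⁻¹ := by
      rw [inv_eq_one_div, le_div_iff₀ h0]; nlinarith
    have hl2 : (1:ℝ) ≤ ‖lam‖⁻¹ := by
      rw [inv_eq_one_div, le_div_iff₀ h0]; nlinarith
    refine ⟨_, _, Ex4Aux.barab lam h0 h1 ‖lam‖ le_rfl hl1,
      Ex4Aux.barab lam h0 h1 1 h1.le hl2, ?_⟩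
    rintro ⟨c, hcpos, hc⟩
    have c00 : (EuclideanSpace.single (0:Fin 2) (1:𝕂) : EuclideanSpace 𝕂 (Fin 2)) 0 = 1 := by
      simp [EuclideanSpace.single_apply]
    have c01 : (EuclideanSpace.single (0:Fin 2) (1:𝕂) : EuclideanSpace 𝕂 (Fin 2)) 1 = 0 := by
      simp [EuclideanSpace.single_apply]
    have c10 : (EuclideanSpace.single (1:Fin 2) (1:𝕂) : EuclideanSpace 𝕂 (Fin 2)) 0 = 0 := by
      simp [EuclideanSpace.single_apply]
    have c11 : (EuclideanSpace.single (1:Fin 2) (1:𝕂) : EuclideanSpace 𝕂 (Fin 2)) 1 = 1 := by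
      simp [EuclideanSpace.single_apply]
    have ha := hc (EuclideanSpace.single (0:Fin 2) (1:𝕂))
    have hb := hc (EuclideanSpace.single (1:Fin 2) (1:𝕂))
    simp only [c00, c01, norm_one, norm_zero, mul_zero, mul_one, one_mul] at ha
    simp only [c10, c11, norm_one, norm_zero, mul_zero, mul_one, one_mul] at hb
    rw [max_eq_left zero_le_one] at ha
    have hc1 : c = 1 := by linarith
    rw [max_eq_right zero_le_one, max_eq_right (norm_nonneg lam), hc1, one_mul] at hb
    exact absurd hb.symm (ne_of_lt h1)
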